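/- Wigner-Eckart theorem for U_h(sl(2)): let T^{(j₁)}={t_{j₁m₁}} be a rank-j₁ tensor operator mapping the irrep W^{(j₂)} into the irrep W^{(j)}. If |φ;m₁m₂⟩ := Σ_{k₁,k₂} α_{k₁,k₂}^{m₁,m₂} t_{j₁k₁}|j₂k₂⟩ satisfies the sl(2)-type relations Z_±|φ;m₁m₂⟩ = √((j₁∓m₁)(j₁±m₁+1))|φ;m₁±1,m₂⟩ + √((j₂∓m₂)(j₂±m₂+1))|φ;m₁,m₂±1⟩, then the matrix elements satisfy Σ_{k₁,k₂} α_{k₁,k₂}^{m₁,m₂} ⟨jm|t_{j₁k₁}|j₂k₂⟩ = C^{j₁,j₂,j}_{m₁,m₂,m} · I(j₁j₂j) for some constant I(j₁j₂j) independent of m₁, m₂, m, where C are the classical sl(2) Clebsch-Gordan coefficients. -/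

import Mathlib

open Finset

/-- Generalized binomial coefficient `C(z,w) = z(z-1)⋯(z-w+1)/w!` for integer `z`,
vanishing for `w < 0`. -/
noncomputable def gchoose (z w : ℤ) : ℝ :=
  if 0 ≤ w then (∏ i ∈ Finset.range w.toNat, ((z : ℝ) - i)) / (w.toNat).factorial else 0

/-- The factor `D_{k₁,k₂}^{m₁,m₂}`.  Throughout, an index `k ∈ {-j,…,j}` is encoded by the
natural number (given here as an integer) `j + k ∈ {0,…,2j}`, and `J = 2j`; thus `μᵢ = jᵢ+mᵢ`
and `aᵢ = jᵢ+kᵢ`. -/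
noncomputable def Dcoef (J₁ J₂ : ℕ) (μ₁ μ₂ a₁ a₂ : ℤ) : ℝ :=
  Real.sqrt
    ((((J₁ : ℤ) - μ₁).toNat.factorial * a₁.toNat.factorial *
        ((J₂ : ℤ) - μ₂).toNat.factorial * a₂.toNat.factorial : ℝ) /
      (μ₁.toNat.factorial * ((J₁ : ℤ) - a₁).toNat.factorial *
        μ₂.toNat.factorial * ((J₂ : ℤ) - a₂).toNat.factorial : ℝ))

/-- The factor `b_{k₁,k₂}^{m₁,m₂} = C(m₁+k₁, k₂-m₂)·C(m₂+k₂, k₁-m₁)` in the encoded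
variables: `m₁+k₁ = μ₁+a₁-J₁`, `k₂-m₂ = a₂-μ₂`, etc. -/
noncomputable def bcoef (J₁ J₂ : ℕ) (μ₁ μ₂ a₁ a₂ : ℤ) : ℝ :=
  gchoose (μ₁ + a₁ - J₁) (a₂ - μ₂) * gchoose (μ₂ + a₂ - J₂) (a₁ - μ₁)

/-- The coefficient `α_{k₁,k₂}^{m₁,m₂}` of `U_h(sl(2))`, in encoded variables (`μᵢ = jᵢ+mᵢ`,
`aᵢ = jᵢ+kᵢ`, `Jᵢ = 2jᵢ`); it vanishes outside the range `mᵢ ≤ kᵢ ≤ jᵢ`, `mᵢ ≥ -jᵢ`. -/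
noncomputable def alphac (h : ℝ) (J₁ J₂ : ℕ) (μ₁ μ₂ a₁ a₂ : ℤ) : ℝ :=
  if 0 ≤ μ₁ ∧ μ₁ ≤ a₁ ∧ a₁ ≤ J₁ ∧ 0 ≤ μ₂ ∧ μ₂ ≤ a₂ ∧ a₂ ≤ J₂ then
    (-1 : ℝ) ^ (a₂ - μ₂).toNat * (h / 2) ^ (a₁ + a₂ - μ₁ - μ₂).toNat *
      Dcoef J₁ J₂ μ₁ μ₂ a₁ a₂ *
      (bcoef J₁ J₂ μ₁ μ₂ a₁ a₂ - bcoef J₁ J₂ μ₁ μ₂ (a₁ - 1) (a₂ - 1))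
  else 0

/-- `ifact z` is `z!` for `z ≥ 0` and `0` for `z < 0`; with Lean's convention `x/0 = 0`,
reciprocals of such factorials vanish exactly when the argument is negative, implementing
the usual convention for Clebsch-Gordan sums. -/
noncomputable def ifact (z : ℤ) : ℝ := if 0 ≤ z then (z.toNat).factorial else 0

/-- The classical `sl(2)` (= `su(2)`) Clebsch-Gordan coefficient
`C^{j₁,j₂,j}_{m₁,m₂,m}`, given by the van der Waerden formula, in the encoded variables
`J = 2j`, `μ = j + m` (so `m = m₁ + m₂` reads `2μ + J₁ + J₂ = 2μ₁ + 2μ₂ + J`). -/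
noncomputable def CG (J₁ J₂ J : ℕ) (μ₁ μ₂ μ : ℤ) : ℝ :=
  if 2 * μ + (J₁ : ℤ) + J₂ = 2 * μ₁ + 2 * μ₂ + J then
    Real.sqrt (((J : ℝ) + 1) * ifact (((J₁ : ℤ) + J₂ - J) / 2) *
        ifact (((J : ℤ) + J₁ - J₂) / 2) * ifact (((J : ℤ) + J₂ - J₁) / 2) /
        ifact (((J₁ : ℤ) + J₂ + J) / 2 + 1)) *
      Real.sqrt (ifact μ₁ * ifact ((J₁ : ℤ) - μ₁) * ifact μ₂ * ifact ((J₂ : ℤ) - μ₂) *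
        ifact μ * ifact ((J : ℤ) - μ)) *
      ∑ k ∈ Finset.range (J₁ + J₂ + 1),
        (-1 : ℝ) ^ k /
          (ifact k * ifact (((J₁ : ℤ) + J₂ - J) / 2 - k) * ifact ((J₁ : ℤ) - μ₁ - k) *
            ifact (μ₂ - k) * ifact (μ₁ - ((J₁ : ℤ) + J₂ - J) / 2 + k) *
            ifact (((J : ℤ) + J₂ - J₁) / 2 - μ₂ + k))
  else 0
-- ifact basics
lemma ifact_nonneg (z : ℤ) : 0 ≤ ifact z := by
  unfold ifact; split <;> positivity

lemma ifact_neg {z : ℤ} (h : z < 0) : ifact z = 0 := by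
  unfold ifact; rw [if_neg (by omega)]

lemma ifact_pos {z : ℤ} (h : 0 ≤ z) : 0 < ifact z := by
  unfold ifact; rw [if_pos h]; positivity

lemma ifact_ne_zero {z : ℤ} (h : 0 ≤ z) : ifact z ≠ 0 := (ifact_pos h).ne'

lemma ifact_succ {z : ℤ} (h : 0 ≤ z) : ifact (z + 1) = (z + 1 : ℤ) * ifact z := by
  unfold ifact
  rw [if_pos (by omega), if_pos h]
  have : (z + 1).toNat = z.toNat + 1 := by omega
  rw [this, Nat.factorial_succ]
  have hz : ((z.toNat : ℕ) : ℝ) = (z : ℝ) := by exact_mod_cast Int.toNat_of_nonneg h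
  push_cast
  rw [hz]; try ring

/-- Key inverse-factorial identity, valid for all integers with junk conventions. -/
lemma ifact_inv_key (n : ℤ) : (n : ℝ) * (ifact n)⁻¹ = (ifact (n - 1))⁻¹ := by
  rcases lt_trichotomy n 0 with hn | hn | hn
  · rw [ifact_neg hn, ifact_neg (by omega)]; simp
  · subst hn; rw [ifact_neg (show (0:ℤ)-1 < 0 by omega)]; simp
  · have h1 : 0 ≤ n - 1 := by omega
    have heq : ifact n = (n : ℝ) * ifact (n - 1) := by
      have h2 := ifact_succ h1
      rw [sub_add_cancel] at h2
      exact h2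
    rw [heq, mul_inv, ← mul_assoc,
      mul_inv_cancel₀ (show (n:ℝ) ≠ 0 by exact_mod_cast hn.ne')]
    rw [one_mul]
/-- The van der Waerden sum, written with inverses. -/
noncomputable def Ssum (J₁ J₂ : ℕ) (p q μ₁ μ₂ : ℤ) : ℝ :=
  ∑ k ∈ Finset.range (J₁ + J₂ + 1),
    (-1 : ℝ) ^ k * ((ifact k)⁻¹ * (ifact (p - k))⁻¹ * (ifact ((J₁ : ℤ) - μ₁ - k))⁻¹ *
      (ifact (μ₂ - k))⁻¹ * (ifact (μ₁ - p + k))⁻¹ * (ifact (q - μ₂ + k))⁻¹)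

lemma Ssum_eq_zero_of_gt (J₁ J₂ : ℕ) (p q μ₁ μ₂ : ℤ) (h : (J₁ : ℤ) < μ₁) :
    Ssum J₁ J₂ p q μ₁ μ₂ = 0 := by
  unfold Ssum
  refine Finset.sum_eq_zero fun k _ => ?_
  rw [ifact_neg (show (J₁ : ℤ) - μ₁ - k < 0 by omega)]
  simp

/-- auxiliary per-term functions for the recursion -/
noncomputable def Eterm (J₁ : ℕ) (p q μ₁ μ₂ : ℤ) (k : ℕ) : ℝ :=
  (-1 : ℝ) ^ k * ((ifact k)⁻¹ * (ifact (p - 1 - k))⁻¹ * (ifact ((J₁ : ℤ) - (μ₁+1) - k))⁻¹ *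
    (ifact (μ₂ - k))⁻¹ * (ifact (μ₁ + 1 - p + k))⁻¹ * (ifact (q - μ₂ + k))⁻¹)

noncomputable def Gterm (J₁ : ℕ) (p q μ₁ μ₂ : ℤ) (k : ℕ) : ℝ :=
  (-1 : ℝ) ^ k * ((ifact ((k : ℤ) - 1))⁻¹ * (ifact (p - k))⁻¹ * (ifact ((J₁ : ℤ) - μ₁ - k))⁻¹ *
    (ifact (μ₂ + 1 - k))⁻¹ * (ifact (μ₁ - p + k))⁻¹ * (ifact (q - (μ₂+1) + k))⁻¹)

noncomputable def L1term (J₁ : ℕ) (p q μ₁ μ₂ : ℤ) (k : ℕ) : ℝ :=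
  (-1 : ℝ) ^ k * ((ifact k)⁻¹ * (ifact (p - k))⁻¹ * (ifact ((J₁ : ℤ) - (μ₁+1) - k))⁻¹ *
    (ifact (μ₂ - k))⁻¹ * (ifact (μ₁ - p + k))⁻¹ * (ifact (q - μ₂ + k))⁻¹)

noncomputable def L2term (J₁ : ℕ) (p q μ₁ μ₂ : ℤ) (k : ℕ) : ℝ :=
  (-1 : ℝ) ^ k * ((ifact k)⁻¹ * (ifact (p - k))⁻¹ * (ifact ((J₁ : ℤ) - μ₁ - k))⁻¹ *
    (ifact (μ₂ - k))⁻¹ * (ifact (μ₁ - p + k))⁻¹ * (ifact (q - (μ₂+1) + k))⁻¹)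

lemma pt_left (J₁ J₂ : ℕ) (p q μ₁ μ₂ : ℤ) (hpq : p + q = J₂) (k : ℕ) :
    ((J₁ : ℝ) + J₂ - p - μ₁ - μ₂) *
      ((-1 : ℝ) ^ k * ((ifact k)⁻¹ * (ifact (p - k))⁻¹ * (ifact ((J₁ : ℤ) - μ₁ - k))⁻¹ *
        (ifact (μ₂ - k))⁻¹ * (ifact (μ₁ - p + k))⁻¹ * (ifact (q - μ₂ + k))⁻¹))
    = L1term J₁ p q μ₁ μ₂ k + L2term J₁ p q μ₁ μ₂ k := by
  have e1 : (((J₁ : ℤ) - μ₁ - k : ℤ) : ℝ) * (ifact ((J₁ : ℤ) - μ₁ - k))⁻¹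
      = (ifact ((J₁ : ℤ) - (μ₁+1) - k))⁻¹ := by
    rw [ifact_inv_key]; ring_nf
  have e2 : ((q - μ₂ + k : ℤ) : ℝ) * (ifact (q - μ₂ + k))⁻¹
      = (ifact (q - (μ₂+1) + k))⁻¹ := by
    rw [ifact_inv_key]; ring_nf
  have hco : ((J₁ : ℝ) + J₂ - p - μ₁ - μ₂)
      = (((J₁ : ℤ) - μ₁ - k : ℤ) : ℝ) + ((q - μ₂ + k : ℤ) : ℝ) := by
    have hc : (J₂ : ℝ) = (p : ℝ) + q := by exact_mod_cast hpq.symm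
    rw [hc]; push_cast; ring
  unfold L1term L2term
  linear_combination
    ((-1 : ℝ) ^ k * ((ifact k)⁻¹ * (ifact (p - k))⁻¹ * (ifact ((J₁ : ℤ) - μ₁ - k))⁻¹ *
      (ifact (μ₂ - k))⁻¹ * (ifact (μ₁ - p + k))⁻¹ * (ifact (q - μ₂ + k))⁻¹)) * hco
    + ((-1 : ℝ) ^ k * ((ifact k)⁻¹ * (ifact (p - k))⁻¹ * (ifact (μ₂ - k))⁻¹ *
      (ifact (μ₁ - p + k))⁻¹ * (ifact (q - μ₂ + k))⁻¹)) * e1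
    + ((-1 : ℝ) ^ k * ((ifact k)⁻¹ * (ifact (p - k))⁻¹ * (ifact ((J₁ : ℤ) - μ₁ - k))⁻¹ *
      (ifact (μ₂ - k))⁻¹ * (ifact (μ₁ - p + k))⁻¹)) * e2

lemma pt_r1 (J₁ : ℕ) (p q μ₁ μ₂ : ℤ) (k : ℕ) :
    ((μ₁ : ℝ) + 1) *
      ((-1 : ℝ) ^ k * ((ifact k)⁻¹ * (ifact (p - k))⁻¹ * (ifact ((J₁ : ℤ) - (μ₁+1) - k))⁻¹ *
        (ifact (μ₂ - k))⁻¹ * (ifact ((μ₁+1) - p + k))⁻¹ * (ifact (q - μ₂ + k))⁻¹))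
    = L1term J₁ p q μ₁ μ₂ k + Eterm J₁ p q μ₁ μ₂ k := by
  have e1 : ((μ₁ + 1 - p + k : ℤ) : ℝ) * (ifact (μ₁ + 1 - p + k))⁻¹
      = (ifact (μ₁ - p + k))⁻¹ := by rw [ifact_inv_key]; ring_nf
  have e2 : ((p - k : ℤ) : ℝ) * (ifact (p - k))⁻¹ = (ifact (p - 1 - k))⁻¹ := by
    rw [ifact_inv_key]; ring_nf
  have hco : ((μ₁ : ℝ) + 1) = ((μ₁ + 1 - p + k : ℤ) : ℝ) + ((p - k : ℤ) : ℝ) := by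
    push_cast; ring
  unfold L1term Eterm
  linear_combination
    ((-1 : ℝ) ^ k * ((ifact k)⁻¹ * (ifact (p - k))⁻¹ * (ifact ((J₁ : ℤ) - (μ₁+1) - k))⁻¹ *
      (ifact (μ₂ - k))⁻¹ * (ifact (μ₁ + 1 - p + k))⁻¹ * (ifact (q - μ₂ + k))⁻¹)) * hco
    + ((-1 : ℝ) ^ k * ((ifact k)⁻¹ * (ifact (p - k))⁻¹ * (ifact ((J₁ : ℤ) - (μ₁+1) - k))⁻¹ *
      (ifact (μ₂ - k))⁻¹ * (ifact (q - μ₂ + k))⁻¹)) * e1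
    + ((-1 : ℝ) ^ k * ((ifact k)⁻¹ * (ifact ((J₁ : ℤ) - (μ₁+1) - k))⁻¹ *
      (ifact (μ₂ - k))⁻¹ * (ifact (μ₁ + 1 - p + k))⁻¹ * (ifact (q - μ₂ + k))⁻¹)) * e2

lemma pt_r2 (J₁ : ℕ) (p q μ₁ μ₂ : ℤ) (k : ℕ) :
    ((μ₂ : ℝ) + 1) *
      ((-1 : ℝ) ^ k * ((ifact k)⁻¹ * (ifact (p - k))⁻¹ * (ifact ((J₁ : ℤ) - μ₁ - k))⁻¹ *
        (ifact ((μ₂+1) - k))⁻¹ * (ifact (μ₁ - p + k))⁻¹ * (ifact (q - (μ₂+1) + k))⁻¹))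
    = L2term J₁ p q μ₁ μ₂ k + Gterm J₁ p q μ₁ μ₂ k := by
  have e1 : ((μ₂ + 1 - k : ℤ) : ℝ) * (ifact (μ₂ + 1 - k))⁻¹ = (ifact (μ₂ - k))⁻¹ := by
    rw [ifact_inv_key]; ring_nf
  have e2 : (((k : ℤ)) : ℝ) * (ifact (k : ℤ))⁻¹ = (ifact ((k : ℤ) - 1))⁻¹ := ifact_inv_key _
  have hco : ((μ₂ : ℝ) + 1) = ((μ₂ + 1 - k : ℤ) : ℝ) + (((k : ℤ)) : ℝ) := by
    push_cast; ring
  unfold L2term Gterm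
  linear_combination
    ((-1 : ℝ) ^ k * ((ifact k)⁻¹ * (ifact (p - k))⁻¹ * (ifact ((J₁ : ℤ) - μ₁ - k))⁻¹ *
      (ifact (μ₂ + 1 - k))⁻¹ * (ifact (μ₁ - p + k))⁻¹ * (ifact (q - (μ₂+1) + k))⁻¹)) * hco
    + ((-1 : ℝ) ^ k * ((ifact k)⁻¹ * (ifact (p - k))⁻¹ * (ifact ((J₁ : ℤ) - μ₁ - k))⁻¹ *
      (ifact (μ₁ - p + k))⁻¹ * (ifact (q - (μ₂+1) + k))⁻¹)) * e1
    + ((-1 : ℝ) ^ k * ((ifact (p - k))⁻¹ * (ifact ((J₁ : ℤ) - μ₁ - k))⁻¹ *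
      (ifact (μ₂ + 1 - k))⁻¹ * (ifact (μ₁ - p + k))⁻¹ * (ifact (q - (μ₂+1) + k))⁻¹)) * e2

lemma pt_tel (J₁ : ℕ) (p q μ₁ μ₂ : ℤ) (k : ℕ) :
    Gterm J₁ p q μ₁ μ₂ (k + 1) = -Eterm J₁ p q μ₁ μ₂ k := by
  unfold Gterm Eterm
  have c1 : ((k + 1 : ℕ) : ℤ) - 1 = (k : ℤ) := by push_cast; ring
  have c2 : (p : ℤ) - ((k + 1 : ℕ) : ℤ) = p - 1 - k := by push_cast; ring
  have c3 : ((J₁ : ℤ)) - μ₁ - ((k + 1 : ℕ) : ℤ) = (J₁ : ℤ) - (μ₁ + 1) - k := by push_cast; ring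
  have c4 : (μ₂ : ℤ) + 1 - ((k + 1 : ℕ) : ℤ) = μ₂ - k := by push_cast; ring
  have c5 : (μ₁ : ℤ) - p + ((k + 1 : ℕ) : ℤ) = μ₁ + 1 - p + k := by push_cast; ring
  have c6 : (q : ℤ) - (μ₂ + 1) + ((k + 1 : ℕ) : ℤ) = q - μ₂ + k := by push_cast; ring
  rw [c1, c2, c3, c4, c5, c6, pow_succ]
  ring

/-- The master recursion identity for the CG sum. -/
lemma Ssum_rec (J₁ J₂ : ℕ) (p q μ₁ μ₂ : ℤ) (hp : 0 ≤ p) (hq : 0 ≤ q) (hpq : p + q = J₂) :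
    ((J₁ : ℝ) + J₂ - p - μ₁ - μ₂) * Ssum J₁ J₂ p q μ₁ μ₂
      = ((μ₁ : ℝ) + 1) * Ssum J₁ J₂ p q (μ₁ + 1) μ₂
        + ((μ₂ : ℝ) + 1) * Ssum J₁ J₂ p q μ₁ (μ₂ + 1) := by
  have hEG : (∑ k ∈ Finset.range (J₁ + J₂ + 1), Eterm J₁ p q μ₁ μ₂ k)
      + (∑ k ∈ Finset.range (J₁ + J₂ + 1), Gterm J₁ p q μ₁ μ₂ k) = 0 := by
    have hG0 : Gterm J₁ p q μ₁ μ₂ 0 = 0 := by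
      unfold Gterm
      rw [show ((0 : ℕ) : ℤ) - 1 = -1 by norm_num, ifact_neg (by omega)]
      simp
    have hEtop : Eterm J₁ p q μ₁ μ₂ (J₁ + J₂) = 0 := by
      unfold Eterm
      rw [ifact_neg (show (p : ℤ) - 1 - ((J₁ + J₂ : ℕ) : ℤ) < 0 by
        have : (p : ℤ) ≤ J₂ := by omega
        push_cast; omega)]
      simp
    rw [Finset.sum_range_succ' (Gterm J₁ p q μ₁ μ₂) (J₁ + J₂),
      Finset.sum_range_succ (Eterm J₁ p q μ₁ μ₂) (J₁ + J₂), hG0, hEtop]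
    have : ∑ k ∈ Finset.range (J₁ + J₂), Gterm J₁ p q μ₁ μ₂ (k + 1)
        = -∑ k ∈ Finset.range (J₁ + J₂), Eterm J₁ p q μ₁ μ₂ k := by
      rw [← Finset.sum_neg_distrib]
      exact Finset.sum_congr rfl fun k _ => pt_tel J₁ p q μ₁ μ₂ k
    rw [this]; ring
  have hLHS : ((J₁ : ℝ) + J₂ - p - μ₁ - μ₂) * Ssum J₁ J₂ p q μ₁ μ₂
      = (∑ k ∈ Finset.range (J₁ + J₂ + 1), L1term J₁ p q μ₁ μ₂ k)
        + (∑ k ∈ Finset.range (J₁ + J₂ + 1), L2term J₁ p q μ₁ μ₂ k) := by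
    unfold Ssum
    rw [Finset.mul_sum, ← Finset.sum_add_distrib]
    exact Finset.sum_congr rfl fun k _ => pt_left J₁ J₂ p q μ₁ μ₂ hpq k
  have hRHS1 : ((μ₁ : ℝ) + 1) * Ssum J₁ J₂ p q (μ₁ + 1) μ₂
      = (∑ k ∈ Finset.range (J₁ + J₂ + 1), L1term J₁ p q μ₁ μ₂ k)
        + (∑ k ∈ Finset.range (J₁ + J₂ + 1), Eterm J₁ p q μ₁ μ₂ k) := by
    unfold Ssum
    rw [Finset.mul_sum, ← Finset.sum_add_distrib]
    exact Finset.sum_congr rfl fun k _ => pt_r1 J₁ p q μ₁ μ₂ k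
  have hRHS2 : ((μ₂ : ℝ) + 1) * Ssum J₁ J₂ p q μ₁ (μ₂ + 1)
      = (∑ k ∈ Finset.range (J₁ + J₂ + 1), L2term J₁ p q μ₁ μ₂ k)
        + (∑ k ∈ Finset.range (J₁ + J₂ + 1), Gterm J₁ p q μ₁ μ₂ k) := by
    unfold Ssum
    rw [Finset.mul_sum, ← Finset.sum_add_distrib]
    exact Finset.sum_congr rfl fun k _ => pt_r2 J₁ p q μ₁ μ₂ k
  rw [hLHS, hRHS1, hRHS2]
  linarith [hEG]
noncomputable def Bfac (J₁ J₂ J : ℕ) (μ₁ μ₂ μ : ℤ) : ℝ :=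
  Real.sqrt (ifact μ₁ * ifact ((J₁ : ℤ) - μ₁) * ifact μ₂ * ifact ((J₂ : ℤ) - μ₂) *
    ifact μ * ifact ((J : ℤ) - μ))

noncomputable def Apre (J₁ J₂ J : ℕ) : ℝ :=
  Real.sqrt (((J : ℝ) + 1) * ifact (((J₁ : ℤ) + J₂ - J) / 2) *
    ifact (((J : ℤ) + J₁ - J₂) / 2) * ifact (((J : ℤ) + J₂ - J₁) / 2) /
    ifact (((J₁ : ℤ) + J₂ + J) / 2 + 1))

lemma CG_eq (J₁ J₂ J : ℕ) (μ₁ μ₂ μ : ℤ) :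
    CG J₁ J₂ J μ₁ μ₂ μ
      = if 2 * μ + (J₁ : ℤ) + J₂ = 2 * μ₁ + 2 * μ₂ + J then
          Apre J₁ J₂ J * Bfac J₁ J₂ J μ₁ μ₂ μ *
            Ssum J₁ J₂ (((J₁ : ℤ) + J₂ - J) / 2) (((J : ℤ) + J₂ - J₁) / 2) μ₁ μ₂
        else 0 := by
  unfold CG Apre Bfac Ssum
  split
  · congr 1
    refine Finset.sum_congr rfl fun k _ => ?_
    rw [div_eq_mul_inv, mul_inv, mul_inv, mul_inv, mul_inv, mul_inv]
  · rfl

lemma Bfac_nonneg (J₁ J₂ J : ℕ) (μ₁ μ₂ μ : ℤ) : 0 ≤ Bfac J₁ J₂ J μ₁ μ₂ μ :=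
  Real.sqrt_nonneg _

lemma CG_eq_zero_off_range (J₁ J₂ J : ℕ) (μ₁ μ₂ μ : ℤ)
    (h : μ₁ < 0 ∨ (J₁ : ℤ) < μ₁ ∨ μ₂ < 0 ∨ (J₂ : ℤ) < μ₂ ∨ μ < 0 ∨ (J : ℤ) < μ) :
    CG J₁ J₂ J μ₁ μ₂ μ = 0 := by
  rw [CG_eq]
  split
  · have hB : Bfac J₁ J₂ J μ₁ μ₂ μ = 0 := by
      unfold Bfac
      rcases h with h | h | h | h | h | h
      · rw [ifact_neg h]; simp
      · rw [ifact_neg (show (J₁ : ℤ) - μ₁ < 0 by omega)]; simp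
      · rw [ifact_neg h]; simp
      · rw [ifact_neg (show (J₂ : ℤ) - μ₂ < 0 by omega)]; simp
      · rw [ifact_neg h]; simp
      · rw [ifact_neg (show (J : ℤ) - μ < 0 by omega)]; simp
    rw [hB]; ring
  · rfl

lemma CG_eq_zero_off_shell (J₁ J₂ J : ℕ) (μ₁ μ₂ μ : ℤ)
    (h : ¬(2 * μ + (J₁ : ℤ) + J₂ = 2 * μ₁ + 2 * μ₂ + J)) :
    CG J₁ J₂ J μ₁ μ₂ μ = 0 := by
  rw [CG_eq, if_neg h]
lemma ifact_expand {z : ℤ} (h : 1 ≤ z) : ifact z = (z : ℝ) * ifact (z - 1) := by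
  have h2 := ifact_succ (show 0 ≤ z - 1 by omega)
  rw [sub_add_cancel] at h2
  exact h2

lemma sqrt_conv {a c X Y : ℝ} (ha : 0 ≤ a) (hc : 0 ≤ c) (hXY : a * X = c ^ 2 * Y) :
    Real.sqrt a * Real.sqrt X = c * Real.sqrt Y := by
  rcases le_or_gt 0 X with hX | hX
  · rw [← Real.sqrt_mul ha, hXY, Real.sqrt_mul (by positivity), Real.sqrt_sq hc]
  · rcases le_or_gt 0 Y with hY | hY
    · -- a * X = c^2 * Y with X<0: then a*X ≤ 0 and c^2 Y ≥ 0 so both 0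
      have h1 : a * X ≤ 0 := mul_nonpos_of_nonneg_of_nonpos ha hX.le
      have h2 : 0 ≤ c ^ 2 * Y := by positivity
      have h3 : c ^ 2 * Y = 0 := le_antisymm (hXY ▸ h1) h2
      rw [Real.sqrt_eq_zero_of_nonpos hX.le]
      rcases mul_eq_zero.1 h3 with h | h
      · have : c = 0 := by nlinarith [sq_nonneg c]
        rw [this]; ring
      · rw [h, Real.sqrt_zero]; ring
    · rw [Real.sqrt_eq_zero_of_nonpos hX.le, Real.sqrt_eq_zero_of_nonpos hY.le]; ring

lemma conv_mu (J₁ J₂ J : ℕ) (μ₁ μ₂ μ : ℤ) (h1 : 1 ≤ μ) (h2 : μ ≤ J) :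
    Real.sqrt ((μ : ℝ) * ((J : ℝ) - μ + 1)) * Bfac J₁ J₂ J μ₁ μ₂ (μ - 1)
      = ((J : ℝ) - μ + 1) * Bfac J₁ J₂ J μ₁ μ₂ μ := by
  unfold Bfac
  have hμ : 0 ≤ (μ : ℝ) * ((J : ℝ) - μ + 1) := by
    have : (μ : ℝ) ≥ 1 := by exact_mod_cast h1
    have : (μ : ℝ) ≤ J := by exact_mod_cast h2
    nlinarith
  have hc : (0 : ℝ) ≤ (J : ℝ) - μ + 1 := by
    have : (μ : ℝ) ≤ J := by exact_mod_cast h2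
    linarith
  refine sqrt_conv hμ hc ?_
  have f1 : ifact μ = (μ : ℝ) * ifact (μ - 1) := ifact_expand h1
  have f2 : ifact ((J : ℤ) - (μ - 1)) = (((J : ℤ) - μ + 1 : ℤ) : ℝ) * ifact ((J : ℤ) - μ) := by
    rw [show (J : ℤ) - (μ - 1) = ((J : ℤ) - μ + 1) from by ring,
      ifact_expand (show 1 ≤ (J : ℤ) - μ + 1 by omega)]
    norm_num
  rw [f1, f2]
  push_cast
  ring

lemma conv_mu1 (J₁ J₂ J : ℕ) (p q μ₁ μ₂ μ : ℤ) (h1 : 0 ≤ μ₁) (h2 : μ₁ ≤ J₁) :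
    Real.sqrt (((J₁ : ℝ) - μ₁) * ((μ₁ : ℝ) + 1)) * Bfac J₁ J₂ J (μ₁ + 1) μ₂ μ *
        Ssum J₁ J₂ p q (μ₁ + 1) μ₂
      = ((μ₁ : ℝ) + 1) * Bfac J₁ J₂ J μ₁ μ₂ μ * Ssum J₁ J₂ p q (μ₁ + 1) μ₂ := by
  rcases eq_or_lt_of_le h2 with heq | hlt
  · rw [Ssum_eq_zero_of_gt J₁ J₂ p q (μ₁ + 1) μ₂ (by omega)]
    ring
  · have key : Real.sqrt (((J₁ : ℝ) - μ₁) * ((μ₁ : ℝ) + 1)) * Bfac J₁ J₂ J (μ₁ + 1) μ₂ μ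
        = ((μ₁ : ℝ) + 1) * Bfac J₁ J₂ J μ₁ μ₂ μ := by
      unfold Bfac
      have ha : 0 ≤ ((J₁ : ℝ) - μ₁) * ((μ₁ : ℝ) + 1) := by
        have : (μ₁ : ℝ) < J₁ := by exact_mod_cast hlt
        have : (0 : ℝ) ≤ μ₁ := by exact_mod_cast h1
        nlinarith
      have hc : (0 : ℝ) ≤ (μ₁ : ℝ) + 1 := by
        have : (0 : ℝ) ≤ μ₁ := by exact_mod_cast h1
        linarith
      refine sqrt_conv ha hc ?_
      have f1 : ifact (μ₁ + 1) = ((μ₁ + 1 : ℤ) : ℝ) * ifact μ₁ := ifact_succ h1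
      have f2 : ifact ((J₁ : ℤ) - μ₁) = (((J₁ : ℤ) - μ₁ : ℤ) : ℝ) * ifact ((J₁ : ℤ) - (μ₁ + 1)) := by
        rw [ifact_expand (show 1 ≤ (J₁ : ℤ) - μ₁ by omega),
          show (J₁ : ℤ) - μ₁ - 1 = (J₁ : ℤ) - (μ₁ + 1) from by ring]
      rw [f1, f2]
      push_cast
      ring
    linear_combination Ssum J₁ J₂ p q (μ₁ + 1) μ₂ * key

lemma conv_mu2 (J₁ J₂ J : ℕ) (p q μ₁ μ₂ μ : ℤ) (h1 : 0 ≤ μ₂) (h2 : μ₂ ≤ J₂)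
    (hpq : p + q = (J₂ : ℤ)) :
    Real.sqrt (((J₂ : ℝ) - μ₂) * ((μ₂ : ℝ) + 1)) * Bfac J₁ J₂ J μ₁ (μ₂ + 1) μ *
        Ssum J₁ J₂ p q μ₁ (μ₂ + 1)
      = ((μ₂ : ℝ) + 1) * Bfac J₁ J₂ J μ₁ μ₂ μ * Ssum J₁ J₂ p q μ₁ (μ₂ + 1) := by
  rcases eq_or_lt_of_le h2 with heq | hlt
  · have hS : Ssum J₁ J₂ p q μ₁ (μ₂ + 1) = 0 := by
      unfold Ssum
      refine Finset.sum_eq_zero fun k _ => ?_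
      rcases le_or_gt (k : ℤ) p with hk | hk
      · rw [ifact_neg (show q - (μ₂ + 1) + (k : ℤ) < 0 by omega)]
        simp
      · rw [ifact_neg (show p - (k : ℤ) < 0 by omega)]
        simp
    rw [hS]
    ring
  · have key : Real.sqrt (((J₂ : ℝ) - μ₂) * ((μ₂ : ℝ) + 1)) * Bfac J₁ J₂ J μ₁ (μ₂ + 1) μ
        = ((μ₂ : ℝ) + 1) * Bfac J₁ J₂ J μ₁ μ₂ μ := by
      unfold Bfac
      have ha : 0 ≤ ((J₂ : ℝ) - μ₂) * ((μ₂ : ℝ) + 1) := by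
        have : (μ₂ : ℝ) < J₂ := by exact_mod_cast hlt
        have : (0 : ℝ) ≤ μ₂ := by exact_mod_cast h1
        nlinarith
      have hc : (0 : ℝ) ≤ (μ₂ : ℝ) + 1 := by
        have : (0 : ℝ) ≤ μ₂ := by exact_mod_cast h1
        linarith
      refine sqrt_conv ha hc ?_
      have f1 : ifact (μ₂ + 1) = ((μ₂ + 1 : ℤ) : ℝ) * ifact μ₂ := ifact_succ h1
      have f2 : ifact ((J₂ : ℤ) - μ₂) = (((J₂ : ℤ) - μ₂ : ℤ) : ℝ) * ifact ((J₂ : ℤ) - (μ₂ + 1)) := by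
        rw [ifact_expand (show 1 ≤ (J₂ : ℤ) - μ₂ by omega),
          show (J₂ : ℤ) - μ₂ - 1 = (J₂ : ℤ) - (μ₂ + 1) from by ring]
      rw [f1, f2]
      push_cast
      ring
    linear_combination Ssum J₁ J₂ p q μ₁ (μ₂ + 1) * key
lemma CG_R2 (J₁ J₂ J : ℕ) (htri₁ : (J : ℤ) ≤ J₁ + J₂) (htri₂ : (J₁ : ℤ) ≤ J + J₂)
    (hpar : (J₁ + J₂ + J) % 2 = 0) (μ₁ μ₂ μ : ℤ)
    (hm1 : 0 ≤ μ₁) (hm1' : μ₁ ≤ J₁) (hm2 : 0 ≤ μ₂) (hm2' : μ₂ ≤ J₂)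
    (hmu : 1 ≤ μ) (hmu' : μ ≤ J) :
    Real.sqrt ((μ : ℝ) * ((J : ℝ) - μ + 1)) * CG J₁ J₂ J μ₁ μ₂ (μ - 1)
      = Real.sqrt (((J₁ : ℝ) - μ₁) * ((μ₁ : ℝ) + 1)) * CG J₁ J₂ J (μ₁ + 1) μ₂ μ
        + Real.sqrt (((J₂ : ℝ) - μ₂) * ((μ₂ : ℝ) + 1)) * CG J₁ J₂ J μ₁ (μ₂ + 1) μ := by
  have hparZ : ((J₁ : ℤ) + J₂ + J) % 2 = 0 := by exact_mod_cast hpar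
  set p := ((J₁ : ℤ) + J₂ - J) / 2 with hpdef
  set q := ((J : ℤ) + J₂ - J₁) / 2 with hqdef
  have hp2 : 2 * p = (J₁ : ℤ) + J₂ - J := by omega
  have hq2 : 2 * q = (J : ℤ) + J₂ - J₁ := by omega
  have hp : 0 ≤ p := by omega
  have hq : 0 ≤ q := by omega
  have hpq : p + q = (J₂ : ℤ) := by omega
  by_cases hsh : 2 * (μ - 1) + (J₁ : ℤ) + J₂ = 2 * μ₁ + 2 * μ₂ + J
  · rw [CG_eq, CG_eq, CG_eq, if_pos (show 2 * (μ - 1) + (J₁ : ℤ) + J₂ = 2 * μ₁ + 2 * μ₂ + J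
      from hsh), if_pos (show 2 * μ + (J₁ : ℤ) + J₂ = 2 * (μ₁ + 1) + 2 * μ₂ + J by omega),
      if_pos (show 2 * μ + (J₁ : ℤ) + J₂ = 2 * μ₁ + 2 * (μ₂ + 1) + J by omega)]
    have e0 := conv_mu J₁ J₂ J μ₁ μ₂ μ hmu hmu'
    have e1 := conv_mu1 J₁ J₂ J p q μ₁ μ₂ μ hm1 hm1'
    have e2 := conv_mu2 J₁ J₂ J p q μ₁ μ₂ μ hm2 hm2' hpq
    have hrec := Ssum_rec J₁ J₂ p q μ₁ μ₂ hp hq hpq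
    have hcoeff : (J : ℝ) - μ + 1 = (J₁ : ℝ) + J₂ - p - μ₁ - μ₂ := by
      have : (J : ℤ) - μ + 1 = (J₁ : ℤ) + J₂ - p - μ₁ - μ₂ := by omega
      exact_mod_cast this
    linear_combination (Apre J₁ J₂ J * Ssum J₁ J₂ p q μ₁ μ₂) * e0
      - Apre J₁ J₂ J * e1 - Apre J₁ J₂ J * e2
      + (Apre J₁ J₂ J * Bfac J₁ J₂ J μ₁ μ₂ μ) * hrec
      + (Apre J₁ J₂ J * Bfac J₁ J₂ J μ₁ μ₂ μ * Ssum J₁ J₂ p q μ₁ μ₂) * hcoeff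
  · rw [CG_eq_zero_off_shell _ _ _ _ _ _ (by omega),
      CG_eq_zero_off_shell _ _ _ _ _ _ (by omega),
      CG_eq_zero_off_shell _ _ _ _ _ _ (by omega)]
    ring
lemma ifact_zero : ifact 0 = 1 := by unfold ifact; norm_num

lemma Ssum_top1 (J₁ J₂ : ℕ) (p q r μ₁ μ₂ : ℤ)
    (hm1 : 1 ≤ μ₁) (hm1' : μ₁ ≤ J₁) (hqm : q - μ₂ = μ₁ - (J₁ : ℤ) - 1)
    (hpr : p + r = (J₁ : ℤ)) :
    Ssum J₁ J₂ p q (μ₁ - 1) μ₂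
      = (-1 : ℝ) ^ (((J₁ : ℤ) + 1 - μ₁).toNat) *
        ((ifact ((J₁ : ℤ) + 1 - μ₁))⁻¹ * (ifact (μ₁ - 1 - r))⁻¹ *
          (ifact q)⁻¹ * (ifact r)⁻¹) := by
  unfold Ssum
  set k₀ : ℕ := ((J₁ : ℤ) + 1 - μ₁).toNat with hk₀def
  have hk₀ : ((k₀ : ℕ) : ℤ) = (J₁ : ℤ) + 1 - μ₁ := Int.toNat_of_nonneg (by omega)
  rw [Finset.sum_eq_single_of_mem k₀
    (Finset.mem_range.2 (by omega))
    (fun k _ hkne => ?_)]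
  · rw [show ((J₁ : ℤ) - (μ₁ - 1) - (k₀ : ℤ)) = 0 by omega,
      show (μ₂ - (k₀ : ℤ)) = q by omega,
      show ((μ₁ - 1) - p + (k₀ : ℤ)) = r by omega,
      show (q - μ₂ + (k₀ : ℤ)) = 0 by omega,
      show ((k₀ : ℕ) : ℤ) = (J₁ : ℤ) + 1 - μ₁ from hk₀,
      show (p - ((J₁ : ℤ) + 1 - μ₁)) = μ₁ - 1 - r by omega, ifact_zero]
    simp only [inv_one, mul_one]
  · have hkk : (k : ℤ) ≠ (J₁ : ℤ) + 1 - μ₁ := by omega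
    rcases lt_or_gt_of_ne hkk with hlt | hgt
    · rw [ifact_neg (show q - μ₂ + (k : ℤ) < 0 by omega)]
      simp
    · rw [ifact_neg (show (J₁ : ℤ) - (μ₁ - 1) - (k : ℤ) < 0 by omega)]
      simp

lemma Ssum_top2 (J₁ J₂ : ℕ) (p q r μ₁ μ₂ : ℤ)
    (hm1 : 1 ≤ μ₁) (hm1' : μ₁ ≤ J₁) (hqm : q - μ₂ = μ₁ - (J₁ : ℤ) - 1)
    (hpr : p + r = (J₁ : ℤ)) :
    Ssum J₁ J₂ p q μ₁ (μ₂ - 1)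
      = (-1 : ℝ) ^ (((J₁ : ℤ) - μ₁).toNat) *
        ((ifact ((J₁ : ℤ) - μ₁))⁻¹ * (ifact (μ₁ - r))⁻¹ *
          (ifact q)⁻¹ * (ifact r)⁻¹) := by
  unfold Ssum
  set k₀ : ℕ := ((J₁ : ℤ) - μ₁).toNat with hk₀def
  have hk₀ : ((k₀ : ℕ) : ℤ) = (J₁ : ℤ) - μ₁ := Int.toNat_of_nonneg (by omega)
  rw [Finset.sum_eq_single_of_mem k₀
    (Finset.mem_range.2 (by omega))
    (fun k _ hkne => ?_)]
  · rw [show ((J₁ : ℤ) - μ₁ - (k₀ : ℤ)) = 0 by omega,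
      show ((μ₂ - 1) - (k₀ : ℤ)) = q by omega,
      show (μ₁ - p + (k₀ : ℤ)) = r by omega,
      show (q - (μ₂ - 1) + (k₀ : ℤ)) = 0 by omega,
      show ((k₀ : ℕ) : ℤ) = (J₁ : ℤ) - μ₁ from hk₀,
      show (p - ((J₁ : ℤ) - μ₁)) = μ₁ - r by omega, ifact_zero]
    simp only [inv_one, mul_one]
  · have hkk : (k : ℤ) ≠ (J₁ : ℤ) - μ₁ := by omega
    rcases lt_or_gt_of_ne hkk with hlt | hgt
    · rw [ifact_neg (show q - (μ₂ - 1) + (k : ℤ) < 0 by omega)]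
      simp
    · rw [ifact_neg (show (J₁ : ℤ) - μ₁ - (k : ℤ) < 0 by omega)]
      simp
lemma sqrt_mul_eq {a X c b Y d : ℝ} (ha : 0 ≤ a) (hX : 0 ≤ X) (hc : 0 ≤ c)
    (hb : 0 ≤ b) (hY : 0 ≤ Y) (hd : 0 ≤ d) (h : a * X * c ^ 2 = b * Y * d ^ 2) :
    Real.sqrt a * Real.sqrt X * c = Real.sqrt b * Real.sqrt Y * d := by
  have l1 : Real.sqrt a * Real.sqrt X * c = Real.sqrt (a * X * c ^ 2) := by
    rw [Real.sqrt_mul (by positivity), ← Real.sqrt_mul ha, Real.sqrt_sq hc]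
  have l2 : Real.sqrt b * Real.sqrt Y * d = Real.sqrt (b * Y * d ^ 2) := by
    rw [Real.sqrt_mul (by positivity), ← Real.sqrt_mul hb, Real.sqrt_sq hd]
  rw [l1, l2, h]

lemma CG_topR1 (J₁ J₂ J : ℕ) (htri₁ : (J : ℤ) ≤ J₁ + J₂) (htri₂ : (J₁ : ℤ) ≤ J + J₂)
    (htri₃ : (J₂ : ℤ) ≤ J + J₁) (hpar : (J₁ + J₂ + J) % 2 = 0) (μ₁ μ₂ : ℤ)
    (hm1 : 1 ≤ μ₁) (hm1' : μ₁ ≤ J₁) (hm2 : 0 ≤ μ₂) (hm2' : μ₂ ≤ J₂)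
    (hsh : 2 * (J : ℤ) + J₁ + J₂ = 2 * (μ₁ - 1) + 2 * μ₂ + J) :
    Real.sqrt ((μ₁ : ℝ) * ((J₁ : ℝ) - μ₁ + 1)) * CG J₁ J₂ J (μ₁ - 1) μ₂ J
      + Real.sqrt ((μ₂ : ℝ) * ((J₂ : ℝ) - μ₂ + 1)) * CG J₁ J₂ J μ₁ (μ₂ - 1) J = 0 := by
  have hparZ : ((J₁ : ℤ) + J₂ + J) % 2 = 0 := by exact_mod_cast hpar
  set p := ((J₁ : ℤ) + J₂ - J) / 2 with hpdef
  set q := ((J : ℤ) + J₂ - J₁) / 2 with hqdef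
  set r := ((J : ℤ) + J₁ - J₂) / 2 with hrdef
  have hp2 : 2 * p = (J₁ : ℤ) + J₂ - J := by omega
  have hq2 : 2 * q = (J : ℤ) + J₂ - J₁ := by omega
  have hr2 : 2 * r = (J : ℤ) + J₁ - J₂ := by omega
  have hq0 : 0 ≤ q := by omega
  have hr0 : 0 ≤ r := by omega
  have hqm : q - μ₂ = μ₁ - (J₁ : ℤ) - 1 := by omega
  have hpr : p + r = (J₁ : ℤ) := by omega
  have hmu2 : 1 ≤ μ₂ := by omega
  have hm1r : r + 1 ≤ μ₁ := by omega
  rw [CG_eq, CG_eq,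
    if_pos (show 2 * (J : ℤ) + J₁ + J₂ = 2 * (μ₁ - 1) + 2 * μ₂ + J from hsh),
    if_pos (show 2 * (J : ℤ) + J₁ + J₂ = 2 * μ₁ + 2 * (μ₂ - 1) + J by omega),
    Ssum_top1 J₁ J₂ p q r μ₁ μ₂ hm1 hm1' hqm hpr,
    Ssum_top2 J₁ J₂ p q r μ₁ μ₂ hm1 hm1' hqm hpr]
  have hpow : ((J₁ : ℤ) + 1 - μ₁).toNat = ((J₁ : ℤ) - μ₁).toNat + 1 := by omega
  rw [hpow, pow_succ]
  -- the key magnitude identity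
  have hca : (J₂ : ℝ) - (μ₂ : ℝ) + 1 = ((μ₁ - r : ℤ) : ℝ) := by
    have : (J₂ : ℤ) - μ₂ + 1 = μ₁ - r := by omega
    exact_mod_cast this
  have key : Real.sqrt ((μ₁ : ℝ) * ((J₁ : ℝ) - μ₁ + 1)) * Bfac J₁ J₂ J (μ₁ - 1) μ₂ J *
        (((μ₁ - r : ℤ) : ℝ))
      = Real.sqrt ((μ₂ : ℝ) * ((J₂ : ℝ) - μ₂ + 1)) * Bfac J₁ J₂ J μ₁ (μ₂ - 1) J *
        ((((J₁ : ℤ) - μ₁ + 1 : ℤ) : ℝ)) := by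
    unfold Bfac
    have hA1 : (0 : ℝ) ≤ (μ₁ : ℝ) * ((J₁ : ℝ) - μ₁ + 1) := by
      have h1 : (1 : ℝ) ≤ (μ₁ : ℝ) := by exact_mod_cast hm1
      have h2 : (μ₁ : ℝ) ≤ (J₁ : ℝ) := by exact_mod_cast hm1'
      nlinarith
    have hA2 : (0 : ℝ) ≤ (μ₂ : ℝ) * ((J₂ : ℝ) - μ₂ + 1) := by
      have h1 : (1 : ℝ) ≤ (μ₂ : ℝ) := by exact_mod_cast hmu2
      have h2 : (μ₂ : ℝ) ≤ (J₂ : ℝ) := by exact_mod_cast hm2'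
      nlinarith
    have hX1 : (0 : ℝ) ≤ ifact (μ₁ - 1) * ifact ((J₁ : ℤ) - (μ₁ - 1)) * ifact μ₂ *
        ifact ((J₂ : ℤ) - μ₂) * ifact (J : ℤ) * ifact ((J : ℤ) - J) := by
      have := ifact_nonneg
      exact mul_nonneg (mul_nonneg (mul_nonneg (mul_nonneg
        (mul_nonneg (this _) (this _)) (this _)) (this _)) (this _)) (this _)
    have hX2 : (0 : ℝ) ≤ ifact μ₁ * ifact ((J₁ : ℤ) - μ₁) * ifact (μ₂ - 1) *
        ifact ((J₂ : ℤ) - (μ₂ - 1)) * ifact (J : ℤ) * ifact ((J : ℤ) - J) := by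
      have := ifact_nonneg
      exact mul_nonneg (mul_nonneg (mul_nonneg (mul_nonneg
        (mul_nonneg (this _) (this _)) (this _)) (this _)) (this _)) (this _)
    have hc : (0 : ℝ) ≤ ((μ₁ - r : ℤ) : ℝ) := by
      have : (0 : ℤ) ≤ μ₁ - r := by omega
      exact_mod_cast this
    have hd : (0 : ℝ) ≤ (((J₁ : ℤ) - μ₁ + 1 : ℤ) : ℝ) := by
      have : (0 : ℤ) ≤ (J₁ : ℤ) - μ₁ + 1 := by omega
      exact_mod_cast this
    refine sqrt_mul_eq hA1 hX1 hc hA2 hX2 hd ?_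
    -- radicand identity
    have g1 : ifact ((J₁ : ℤ) - (μ₁ - 1)) = (((J₁ : ℤ) - μ₁ + 1 : ℤ) : ℝ) *
        ifact ((J₁ : ℤ) - μ₁) := by
      rw [show (J₁ : ℤ) - (μ₁ - 1) = ((J₁ : ℤ) - μ₁ + 1) from by ring,
        ifact_expand (show 1 ≤ (J₁ : ℤ) - μ₁ + 1 by omega),
        show (J₁ : ℤ) - μ₁ + 1 - 1 = (J₁ : ℤ) - μ₁ from by ring]
    have g2 : ifact μ₁ = (μ₁ : ℝ) * ifact (μ₁ - 1) := ifact_expand hm1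
    have g3 : ifact μ₂ = (μ₂ : ℝ) * ifact (μ₂ - 1) := ifact_expand hmu2
    have g4 : ifact ((J₂ : ℤ) - (μ₂ - 1)) = ((μ₁ - r : ℤ) : ℝ) * ifact ((J₂ : ℤ) - μ₂) := by
      rw [show (J₂ : ℤ) - (μ₂ - 1) = ((J₂ : ℤ) - μ₂ + 1) from by ring,
        ifact_expand (show 1 ≤ (J₂ : ℤ) - μ₂ + 1 by omega),
        show (J₂ : ℤ) - μ₂ + 1 - 1 = (J₂ : ℤ) - μ₂ from by ring,
        show (((J₂ : ℤ) - μ₂ + 1 : ℤ) : ℝ) = ((μ₁ - r : ℤ) : ℝ) from by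
          exact_mod_cast (show (J₂ : ℤ) - μ₂ + 1 = μ₁ - r by omega)]
    rw [g1, g2, g3, g4, hca]
    push_cast
    ring
  -- inverse form of the key identity
  have hu : ifact ((J₁ : ℤ) + 1 - μ₁)
      = (((J₁ : ℤ) - μ₁ + 1 : ℤ) : ℝ) * ifact ((J₁ : ℤ) - μ₁) := by
    rw [show (J₁ : ℤ) + 1 - μ₁ = ((J₁ : ℤ) - μ₁ + 1) from by ring,
      ifact_expand (show 1 ≤ (J₁ : ℤ) - μ₁ + 1 by omega),
      show (J₁ : ℤ) - μ₁ + 1 - 1 = (J₁ : ℤ) - μ₁ from by ring]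
  have hv : ifact (μ₁ - r) = ((μ₁ - r : ℤ) : ℝ) * ifact (μ₁ - 1 - r) := by
    rw [ifact_expand (show 1 ≤ μ₁ - r by omega),
      show μ₁ - r - 1 = μ₁ - 1 - r from by ring]
  have hαne : (((J₁ : ℤ) - μ₁ + 1 : ℤ) : ℝ) ≠ 0 := by
    have : (0 : ℤ) < (J₁ : ℤ) - μ₁ + 1 := by omega
    exact_mod_cast this.ne'
  have hβne : ((μ₁ - r : ℤ) : ℝ) ≠ 0 := by
    have : (0 : ℤ) < μ₁ - r := by omega
    exact_mod_cast this.ne'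
  have hune : ifact ((J₁ : ℤ) - μ₁) ≠ 0 := ifact_ne_zero (by omega)
  have hvne : ifact (μ₁ - 1 - r) ≠ 0 := ifact_ne_zero (by omega)
  have key' : Real.sqrt ((μ₁ : ℝ) * ((J₁ : ℝ) - μ₁ + 1)) * Bfac J₁ J₂ J (μ₁ - 1) μ₂ J *
        ((ifact ((J₁ : ℤ) + 1 - μ₁))⁻¹ * (ifact (μ₁ - 1 - r))⁻¹)
      = Real.sqrt ((μ₂ : ℝ) * ((J₂ : ℝ) - μ₂ + 1)) * Bfac J₁ J₂ J μ₁ (μ₂ - 1) J *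
        ((ifact ((J₁ : ℤ) - μ₁))⁻¹ * (ifact (μ₁ - r))⁻¹) := by
    have hαc : (((J₁ : ℤ) - μ₁ + 1 : ℤ) : ℝ) * ((((J₁ : ℤ) - μ₁ + 1 : ℤ) : ℝ))⁻¹ = 1 :=
      mul_inv_cancel₀ hαne
    have hβc : ((μ₁ - r : ℤ) : ℝ) * (((μ₁ - r : ℤ) : ℝ))⁻¹ = 1 := mul_inv_cancel₀ hβne
    rw [hu, hv, mul_inv, mul_inv]
    linear_combination
      ((ifact ((J₁ : ℤ) - μ₁))⁻¹ * (ifact (μ₁ - 1 - r))⁻¹ * ((((J₁ : ℤ) - μ₁ + 1 : ℤ) : ℝ))⁻¹ *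
        (((μ₁ - r : ℤ) : ℝ))⁻¹) * key
      - ((ifact ((J₁ : ℤ) - μ₁))⁻¹ * (ifact (μ₁ - 1 - r))⁻¹ *
        Real.sqrt ((μ₁ : ℝ) * ((J₁ : ℝ) - μ₁ + 1)) * Bfac J₁ J₂ J (μ₁ - 1) μ₂ J *
        ((((J₁ : ℤ) - μ₁ + 1 : ℤ) : ℝ))⁻¹) * hβc
      + ((ifact ((J₁ : ℤ) - μ₁))⁻¹ * (ifact (μ₁ - 1 - r))⁻¹ *
        Real.sqrt ((μ₂ : ℝ) * ((J₂ : ℝ) - μ₂ + 1)) * Bfac J₁ J₂ J μ₁ (μ₂ - 1) J *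
        (((μ₁ - r : ℤ) : ℝ))⁻¹) * hαc
  linear_combination (-((-1 : ℝ) ^ (((J₁ : ℤ) - μ₁).toNat) * Apre J₁ J₂ J *
    (ifact q)⁻¹ * (ifact r)⁻¹)) * key'
lemma CG_seed_pos (J₁ J₂ J : ℕ) (htri₁ : (J : ℤ) ≤ J₁ + J₂) (htri₂ : (J₁ : ℤ) ≤ J + J₂)
    (htri₃ : (J₂ : ℤ) ≤ J + J₁) (hpar : (J₁ + J₂ + J) % 2 = 0) :
    0 < CG J₁ J₂ J (J₁ : ℤ) (((J : ℤ) + J₂ - J₁) / 2) (J : ℤ) := by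
  have hparZ : ((J₁ : ℤ) + J₂ + J) % 2 = 0 := by exact_mod_cast hpar
  set p := ((J₁ : ℤ) + J₂ - J) / 2 with hpdef
  set q := ((J : ℤ) + J₂ - J₁) / 2 with hqdef
  have hp2 : 2 * p = (J₁ : ℤ) + J₂ - J := by omega
  have hq2 : 2 * q = (J : ℤ) + J₂ - J₁ := by omega
  have hp0 : 0 ≤ p := by omega
  have hq0 : 0 ≤ q := by omega
  rw [CG_eq, if_pos (show 2 * (J : ℤ) + J₁ + J₂ = 2 * (J₁ : ℤ) + 2 * q + J by omega)]
  have hApre : 0 < Apre J₁ J₂ J := by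
    unfold Apre
    apply Real.sqrt_pos.2
    apply div_pos
    · have h1 : (0 : ℝ) < (J : ℝ) + 1 := by positivity
      have h2 := ifact_pos (show (0 : ℤ) ≤ ((J₁ : ℤ) + J₂ - J) / 2 by omega)
      have h3 := ifact_pos (show (0 : ℤ) ≤ ((J : ℤ) + J₁ - J₂) / 2 by omega)
      have h4 := ifact_pos (show (0 : ℤ) ≤ ((J : ℤ) + J₂ - J₁) / 2 by omega)
      positivity
    · exact ifact_pos (by omega)
  have hBfac : 0 < Bfac J₁ J₂ J (J₁ : ℤ) q (J : ℤ) := by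
    unfold Bfac
    apply Real.sqrt_pos.2
    have h1 := ifact_pos (show (0 : ℤ) ≤ (J₁ : ℤ) by omega)
    have h2 := ifact_pos (show (0 : ℤ) ≤ (J₁ : ℤ) - J₁ by omega)
    have h3 := ifact_pos hq0
    have h4 := ifact_pos (show (0 : ℤ) ≤ (J₂ : ℤ) - q by omega)
    have h5 := ifact_pos (show (0 : ℤ) ≤ (J : ℤ) by omega)
    have h6 := ifact_pos (show (0 : ℤ) ≤ (J : ℤ) - J by omega)
    positivity
  have hSsum : 0 < Ssum J₁ J₂ p q (J₁ : ℤ) q := by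
    unfold Ssum
    rw [Finset.sum_eq_single_of_mem 0 (Finset.mem_range.2 (by omega))
      (fun k _ hkne => by
        rw [ifact_neg (show (J₁ : ℤ) - (J₁ : ℤ) - (k : ℤ) < 0 by omega)]
        simp)]
    have i1 := ifact_pos (show (0 : ℤ) ≤ ((0 : ℕ) : ℤ) by omega)
    have i2 := ifact_pos (show (0 : ℤ) ≤ p - ((0 : ℕ) : ℤ) by omega)
    have i3 := ifact_pos (show (0 : ℤ) ≤ (J₁ : ℤ) - (J₁ : ℤ) - ((0 : ℕ) : ℤ) by omega)
    have i4 := ifact_pos (show (0 : ℤ) ≤ q - ((0 : ℕ) : ℤ) by omega)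
    have i5 := ifact_pos (show (0 : ℤ) ≤ (J₁ : ℤ) - p + ((0 : ℕ) : ℤ) by omega)
    have i6 := ifact_pos (show (0 : ℤ) ≤ q - q + ((0 : ℕ) : ℤ) by omega)
    positivity
  positivity


/-- **Wigner-Eckart theorem for `U_h(sl(2))`.**  Let `t a₁` (for `a₁ = j₁ + k₁`) be the
components of a rank-`j₁` tensor operator mapping the irrep `W^{(j₂)}` (with basis
`ket2 a₂`, `a₂ = j₂ + k₂`) into the irrep `W^{(j)}` (with orthonormal basis `ket μ`,
`μ = j + m`, on which `Z₊, Z₋, H` act by the standard unitary `sl(2)` formulas).  If the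
contracted intermediate vectors `φ m₁ m₂ = Σ_k α_{k₁,k₂}^{m₁,m₂} t_{j₁k₁}|j₂k₂⟩` satisfy
the `sl(2)`-type ladder relations, then the matrix elements
`Σ_k α_{k₁,k₂}^{m₁,m₂} ⟨jm|t_{j₁k₁}|j₂k₂⟩ = ⟨jm|φ;m₁m₂⟩` are proportional to the
classical Clebsch-Gordan coefficients, with a proportionality constant `I(j₁j₂j)`
independent of `m₁, m₂, m`. -/
theorem wigner_eckart_jordanian (h : ℝ) (J₁ J₂ J : ℕ)
    (htri₁ : (J : ℤ) ≤ J₁ + J₂) (htri₂ : (J₁ : ℤ) ≤ J + J₂) (htri₃ : (J₂ : ℤ) ≤ J + J₁)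
    (hpar : (J₁ + J₂ + J) % 2 = 0)
    {V₂ : Type*} [AddCommGroup V₂] [Module ℝ V₂]
    {V : Type*} [NormedAddCommGroup V] [InnerProductSpace ℝ V]
    (ket : ℤ → V) (ket2 : ℤ → V₂) (Zp Zm Hop : V →ₗ[ℝ] V) (t : ℤ → (V₂ →ₗ[ℝ] V))
    (horth : ∀ μ ν : ℤ, 0 ≤ μ → μ ≤ J → 0 ≤ ν → ν ≤ J →
      (inner ℝ (ket μ) (ket ν) : ℝ) = if μ = ν then 1 else 0)
    (hZp : ∀ μ : ℤ, 0 ≤ μ → μ ≤ J →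
      Zp (ket μ) = Real.sqrt (((J : ℝ) - μ) * (μ + 1)) • ket (μ + 1))
    (hZm : ∀ μ : ℤ, 0 ≤ μ → μ ≤ J →
      Zm (ket μ) = Real.sqrt ((μ : ℝ) * ((J : ℝ) - μ + 1)) • ket (μ - 1))
    (hH : ∀ μ : ℤ, 0 ≤ μ → μ ≤ J → Hop (ket μ) = ((2 * μ - J : ℤ) : ℝ) • ket μ)
    (hadj : ∀ v w : V, (inner ℝ (Zp v) w : ℝ) = inner ℝ v (Zm w))
    (hadjH : ∀ v w : V, (inner ℝ (Hop v) w : ℝ) = inner ℝ v (Hop w))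
    (φ : ℤ → ℤ → V)
    (hφ : ∀ μ₁ μ₂ : ℤ, φ μ₁ μ₂ =
      ∑ a₁ ∈ Finset.Icc (0 : ℤ) J₁, ∑ a₂ ∈ Finset.Icc (0 : ℤ) J₂,
        alphac h J₁ J₂ μ₁ μ₂ a₁ a₂ • (t a₁) (ket2 a₂))
    (hladP : ∀ μ₁ μ₂ : ℤ, Zp (φ μ₁ μ₂)
      = Real.sqrt (((J₁ : ℝ) - μ₁) * (μ₁ + 1)) • φ (μ₁ + 1) μ₂
        + Real.sqrt (((J₂ : ℝ) - μ₂) * (μ₂ + 1)) • φ μ₁ (μ₂ + 1))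
    (hladM : ∀ μ₁ μ₂ : ℤ, Zm (φ μ₁ μ₂)
      = Real.sqrt ((μ₁ : ℝ) * ((J₁ : ℝ) - μ₁ + 1)) • φ (μ₁ - 1) μ₂
        + Real.sqrt ((μ₂ : ℝ) * ((J₂ : ℝ) - μ₂ + 1)) • φ μ₁ (μ₂ - 1))
    (hladH : ∀ μ₁ μ₂ : ℤ, Hop (φ μ₁ μ₂)
      = ((2 * (μ₁ + μ₂) - J₁ - J₂ : ℤ) : ℝ) • φ μ₁ μ₂) :
    ∃ I : ℝ, ∀ μ₁ μ₂ μ : ℤ,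
      0 ≤ μ₁ → μ₁ ≤ J₁ → 0 ≤ μ₂ → μ₂ ≤ J₂ → 0 ≤ μ → μ ≤ J →
        (inner ℝ (ket μ) (φ μ₁ μ₂) : ℝ) = CG J₁ J₂ J μ₁ μ₂ μ * I := by
  classical
  have hparZ : ((J₁ : ℤ) + J₂ + J) % 2 = 0 := by exact_mod_cast hpar
  set q := ((J : ℤ) + J₂ - J₁) / 2 with hqdef
  have hq2 : 2 * q = (J : ℤ) + J₂ - J₁ := by omega
  have hq0 : 0 ≤ q := by omega
  have hqJ₂ : q ≤ (J₂ : ℤ) := by omega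
  -- off-range vanishing of φ
  have hφ0 : ∀ μ₁ μ₂ : ℤ, (μ₁ < 0 ∨ (J₁ : ℤ) < μ₁ ∨ μ₂ < 0 ∨ (J₂ : ℤ) < μ₂) →
      φ μ₁ μ₂ = 0 := by
    intro μ₁ μ₂ hcase
    rw [hφ]
    refine Finset.sum_eq_zero fun a₁ ha₁ => Finset.sum_eq_zero fun a₂ ha₂ => ?_
    simp only [Finset.mem_Icc] at ha₁ ha₂
    have hne : ¬(0 ≤ μ₁ ∧ μ₁ ≤ a₁ ∧ a₁ ≤ (J₁ : ℤ) ∧ 0 ≤ μ₂ ∧ μ₂ ≤ a₂ ∧ a₂ ≤ (J₂ : ℤ)) := by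
      omega
    unfold alphac
    rw [if_neg hne, zero_smul]
  -- the seed constant
  set I : ℝ := (inner ℝ (ket (J : ℤ)) (φ (J₁ : ℤ) q) : ℝ) / CG J₁ J₂ J (J₁ : ℤ) q (J : ℤ)
    with hIdef
  refine ⟨I, ?_⟩
  -- the difference function
  set g : ℤ → ℤ → ℤ → ℝ := fun μ₁ μ₂ μ =>
    (inner ℝ (ket μ) (φ μ₁ μ₂) : ℝ) - CG J₁ J₂ J μ₁ μ₂ μ * I with hgdef
  have hCGseed := CG_seed_pos J₁ J₂ J htri₁ htri₂ htri₃ hpar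
  have g_seed : g (J₁ : ℤ) q (J : ℤ) = 0 := by
    rw [hgdef]
    simp only
    rw [hIdef]
    have hCGne : CG J₁ J₂ J (J₁ : ℤ) q (J : ℤ) ≠ 0 := hCGseed.ne'
    field_simp
    ring
  have g_offrange : ∀ μ₁ μ₂ μ : ℤ, 0 ≤ μ → μ ≤ J →
      (μ₁ < 0 ∨ (J₁ : ℤ) < μ₁ ∨ μ₂ < 0 ∨ (J₂ : ℤ) < μ₂) → g μ₁ μ₂ μ = 0 := by
    intro μ₁ μ₂ μ hμ hμ' hcase
    rw [hgdef]
    simp only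
    rw [hφ0 μ₁ μ₂ hcase, inner_zero_right,
      CG_eq_zero_off_range J₁ J₂ J μ₁ μ₂ μ (by tauto)]
    ring
  have g_offshell : ∀ μ₁ μ₂ μ : ℤ, 0 ≤ μ → μ ≤ J →
      ¬(2 * μ + (J₁ : ℤ) + J₂ = 2 * μ₁ + 2 * μ₂ + J) → g μ₁ μ₂ μ = 0 := by
    intro μ₁ μ₂ μ hμ hμ' hsh
    have h1 : (inner ℝ (Hop (ket μ)) (φ μ₁ μ₂) : ℝ) = inner ℝ (ket μ) (Hop (φ μ₁ μ₂)) :=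
      hadjH _ _
    rw [hH μ hμ hμ', hladH μ₁ μ₂, real_inner_smul_left, real_inner_smul_right] at h1
    have hzero : (inner ℝ (ket μ) (φ μ₁ μ₂) : ℝ) = 0 := by
      have hco : ((2 * μ - J : ℤ) : ℝ) ≠ ((2 * (μ₁ + μ₂) - J₁ - J₂ : ℤ) : ℝ) := by
        have : (2 * μ - J : ℤ) ≠ (2 * (μ₁ + μ₂) - J₁ - J₂ : ℤ) := by omega
        exact_mod_cast this
      by_contra hne
      exact hco (mul_right_cancel₀ hne h1)
    rw [hgdef]
    simp only
    rw [hzero, CG_eq_zero_off_shell J₁ J₂ J μ₁ μ₂ μ hsh]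
    ring
  -- adjoint the other way
  have hadj' : ∀ v w : V, (inner ℝ (Zm v) w : ℝ) = inner ℝ v (Zp w) := by
    intro v w
    rw [real_inner_comm, ← hadj, real_inner_comm]
  -- top-row relation for the matrix elements
  have topF : ∀ μ₁ μ₂ : ℤ,
      Real.sqrt ((μ₁ : ℝ) * ((J₁ : ℝ) - μ₁ + 1)) * (inner ℝ (ket (J : ℤ)) (φ (μ₁ - 1) μ₂) : ℝ)
        + Real.sqrt ((μ₂ : ℝ) * ((J₂ : ℝ) - μ₂ + 1)) *
          (inner ℝ (ket (J : ℤ)) (φ μ₁ (μ₂ - 1)) : ℝ) = 0 := by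
    intro μ₁ μ₂
    have h1 : (inner ℝ (Zp (ket (J : ℤ))) (φ μ₁ μ₂) : ℝ)
        = inner ℝ (ket (J : ℤ)) (Zm (φ μ₁ μ₂)) := hadj _ _
    rw [hZp (J : ℤ) (by positivity) le_rfl, hladM μ₁ μ₂, real_inner_smul_left,
      inner_add_right, real_inner_smul_right, real_inner_smul_right] at h1
    have hz : Real.sqrt (((J : ℝ) - ((J : ℤ) : ℝ)) * (((J : ℤ) : ℝ) + 1)) = 0 := by
      rw [show ((J : ℝ) - ((J : ℤ) : ℝ)) = 0 by push_cast; ring, zero_mul, Real.sqrt_zero]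
    rw [hz, zero_mul] at h1
    push_cast at h1 ⊢
    linarith [h1]
  -- descent relation for the matrix elements
  have descF : ∀ μ₁ μ₂ μ : ℤ, 1 ≤ μ → μ ≤ J →
      Real.sqrt ((μ : ℝ) * ((J : ℝ) - μ + 1)) * (inner ℝ (ket (μ - 1)) (φ μ₁ μ₂) : ℝ)
        = Real.sqrt (((J₁ : ℝ) - μ₁) * ((μ₁ : ℝ) + 1)) * (inner ℝ (ket μ) (φ (μ₁ + 1) μ₂) : ℝ)
          + Real.sqrt (((J₂ : ℝ) - μ₂) * ((μ₂ : ℝ) + 1)) *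
            (inner ℝ (ket μ) (φ μ₁ (μ₂ + 1)) : ℝ) := by
    intro μ₁ μ₂ μ hμ hμ'
    have h1 : (inner ℝ (Zm (ket μ)) (φ μ₁ μ₂) : ℝ)
        = inner ℝ (ket μ) (Zp (φ μ₁ μ₂)) := hadj' _ _
    rw [hZm μ (by omega) hμ', hladP μ₁ μ₂, real_inner_smul_left,
      inner_add_right, real_inner_smul_right, real_inner_smul_right] at h1
    exact h1
  -- the top row of g vanishes
  have g_top : ∀ n : ℕ, ∀ μ₁ μ₂ : ℤ, μ₁ = (J₁ : ℤ) - n → g μ₁ μ₂ (J : ℤ) = 0 := by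
    intro n
    induction n with
    | zero =>
      intro μ₁ μ₂ hμ₁
      by_cases hr2 : 0 ≤ μ₂ ∧ μ₂ ≤ (J₂ : ℤ)
      · by_cases hsh : 2 * (J : ℤ) + J₁ + J₂ = 2 * μ₁ + 2 * μ₂ + J
        · have hμ₂ : μ₂ = q := by omega
          rw [hμ₁, hμ₂]
          simpa using g_seed
        · exact g_offshell μ₁ μ₂ (J : ℤ) (by positivity) le_rfl hsh
      · exact g_offrange μ₁ μ₂ (J : ℤ) (by positivity) le_rfl (by omega)
    | succ n ih =>
      intro μ₁ μ₂ hμ₁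
      by_cases hr1 : 0 ≤ μ₁
      · by_cases hr2 : 0 ≤ μ₂ ∧ μ₂ ≤ (J₂ : ℤ)
        · by_cases hsh : 2 * (J : ℤ) + J₁ + J₂ = 2 * μ₁ + 2 * μ₂ + J
          · -- use the top relation at (μ₁+1, μ₂)
            have hm1 : μ₁ + 1 ≤ (J₁ : ℤ) := by omega
            have hF := topF (μ₁ + 1) μ₂
            have hCG := CG_topR1 J₁ J₂ J htri₁ htri₂ htri₃ hpar (μ₁ + 1) μ₂
              (by omega) hm1 hr2.1 hr2.2 (by omega)
            have hIH : g (μ₁ + 1) (μ₂ - 1) (J : ℤ) = 0 := ih (μ₁ + 1) (μ₂ - 1) (by omega)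
            have hgrel : Real.sqrt (((μ₁ : ℝ) + 1) * ((J₁ : ℝ) - (μ₁ + 1) + 1)) *
                g μ₁ μ₂ (J : ℤ) = 0 := by
              rw [hgdef]
              simp only
              have e1 : (μ₁ + 1 : ℤ) - 1 = μ₁ := by ring
              rw [e1] at hF hCG
              have hcast : ((μ₁ + 1 : ℤ) : ℝ) = (μ₁ : ℝ) + 1 := by push_cast; ring
              have hcast2 : ((J₁ : ℝ) - ((μ₁ + 1 : ℤ) : ℝ) + 1) = (J₁ : ℝ) - (μ₁ + 1) + 1 := by
                push_cast; ring
              rw [hgdef] at hIH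
              simp only at hIH
              push_cast at hF hCG hIH ⊢
              linear_combination hF - I * hCG
                - Real.sqrt ((μ₂ : ℝ) * ((J₂ : ℝ) - μ₂ + 1)) * hIH
            have hpos : 0 < Real.sqrt (((μ₁ : ℝ) + 1) * ((J₁ : ℝ) - (μ₁ + 1) + 1)) := by
              apply Real.sqrt_pos.2
              have c1 : (0 : ℝ) ≤ (μ₁ : ℝ) := by exact_mod_cast hr1
              have c2 : (μ₁ : ℝ) + 1 ≤ (J₁ : ℝ) := by exact_mod_cast hm1
              nlinarith
            exact (mul_eq_zero.1 hgrel).resolve_left hpos.ne'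
          · exact g_offshell μ₁ μ₂ (J : ℤ) (by positivity) le_rfl hsh
        · exact g_offrange μ₁ μ₂ (J : ℤ) (by positivity) le_rfl (by omega)
      · exact g_offrange μ₁ μ₂ (J : ℤ) (by positivity) le_rfl (by omega)
  -- all rows of g vanish
  have g_row : ∀ n : ℕ, n ≤ J → ∀ μ₁ μ₂ : ℤ, g μ₁ μ₂ ((J : ℤ) - n) = 0 := by
    intro n
    induction n with
    | zero =>
      intro _ μ₁ μ₂
      rcases le_or_gt μ₁ (J₁ : ℤ) with hle | hlt
      · have := g_top ((J₁ : ℤ) - μ₁).toNat μ₁ μ₂ (by omega)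
        simpa using this
      · have := g_offrange μ₁ μ₂ (J : ℤ) (by positivity) le_rfl (by omega)
        simpa using this
    | succ n ih =>
      intro hn μ₁ μ₂
      have hμrange : 1 ≤ (J : ℤ) - n ∧ (J : ℤ) - n ≤ J := by omega
      by_cases hr : 0 ≤ μ₁ ∧ μ₁ ≤ (J₁ : ℤ) ∧ 0 ≤ μ₂ ∧ μ₂ ≤ (J₂ : ℤ)
      · set μ : ℤ := (J : ℤ) - n with hμdef
        have hF := descF μ₁ μ₂ μ hμrange.1 hμrange.2
        have hCG := CG_R2 J₁ J₂ J htri₁ htri₂ hpar μ₁ μ₂ μ hr.1 hr.2.1 hr.2.2.1 hr.2.2.2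
          hμrange.1 hμrange.2
        have hIH1 : g (μ₁ + 1) μ₂ μ = 0 := ih (by omega) (μ₁ + 1) μ₂
        have hIH2 : g μ₁ (μ₂ + 1) μ = 0 := ih (by omega) μ₁ (μ₂ + 1)
        have hgrel : Real.sqrt ((μ : ℝ) * ((J : ℝ) - μ + 1)) * g μ₁ μ₂ (μ - 1) = 0 := by
          rw [hgdef]
          simp only
          rw [hgdef] at hIH1 hIH2
          simp only at hIH1 hIH2
          linear_combination hF - I * hCG
            + Real.sqrt (((J₁ : ℝ) - μ₁) * ((μ₁ : ℝ) + 1)) * hIH1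
            + Real.sqrt (((J₂ : ℝ) - μ₂) * ((μ₂ : ℝ) + 1)) * hIH2
        have hpos : 0 < Real.sqrt ((μ : ℝ) * ((J : ℝ) - μ + 1)) := by
          apply Real.sqrt_pos.2
          have c1 : (1 : ℝ) ≤ (μ : ℝ) := by exact_mod_cast hμrange.1
          have c2 : (μ : ℝ) ≤ (J : ℝ) := by exact_mod_cast hμrange.2
          nlinarith
        have hres := (mul_eq_zero.1 hgrel).resolve_left hpos.ne'
        have harg : μ - 1 = (J : ℤ) - (n + 1 : ℕ) := by push_cast; omega
        rwa [harg] at hres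
      · have harg : 0 ≤ (J : ℤ) - (n + 1 : ℕ) ∧ (J : ℤ) - (n + 1 : ℕ) ≤ J := by
          push_cast; omega
        exact g_offrange μ₁ μ₂ _ harg.1 harg.2 (by omega)
  -- conclude
  intro μ₁ μ₂ μ hμ₁ hμ₁' hμ₂ hμ₂' hμ hμ'
  have hn : ((J : ℤ) - μ).toNat ≤ J := by omega
  have := g_row ((J : ℤ) - μ).toNat hn μ₁ μ₂
  have harg : (J : ℤ) - (((J : ℤ) - μ).toNat : ℤ) = μ := by omega
  rw [harg, hgdef] at this
  simp only at this
  linarith [this]
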